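/- If t is a positive integer with t ≡ 7 (mod 12), then c₃(t) = (t³ − 16t² + 73t − 70)/6. -/

import Mathlib

open Finset

set_option linter.unusedVariables false

/-- A 3×3 magic square with entries bounded above (strictly) by `t`: pairwise distinct
positive integer entries less than `t`, with all row sums, column sums, and both main
diagonal sums equal to one another. -/
def IsBoundedMagicSquare3 (t : ℕ) (M : Matrix (Fin 3) (Fin 3) ℕ) : Prop :=
  (∀ i j, 0 < M i j ∧ M i j < t) ∧
  (Function.Injective fun p : Fin 3 × Fin 3 => M p.1 p.2) ∧
  ∃ s, (∀ i, ∑ j, M i j = s) ∧ (∀ j, ∑ i, M i j = s) ∧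
    M 0 0 + M 1 1 + M 2 2 = s ∧ M 0 2 + M 1 1 + M 2 0 = s

/-- The number of 3×3 magic squares all of whose entries are less than `t`. -/
noncomputable def c3 (t : ℕ) : ℕ :=
  Set.ncard {M : Matrix (Fin 3) (Fin 3) ℕ | IsBoundedMagicSquare3 t M}

private def sg (e : Bool) (p : ℕ) : ℤ := if e then (p : ℤ) else -(p : ℤ)

private def matZ (a b c : ℤ) : Matrix (Fin 3) (Fin 3) ℤ :=
  !![c+a, c-a-b, c+b; c-a+b, c, c+a-b; c-b, c+a+b, c-a]

private def matN (x : Bool × Bool × ℕ × ℕ × ℕ) : Matrix (Fin 3) (Fin 3) ℕ :=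
  Matrix.of fun i j => (matZ (sg x.1 x.2.2.1) (sg x.2.1 x.2.2.2.1) (x.2.2.2.2 : ℤ) i j).toNat

private def Sf (t : ℕ) : Finset (ℕ × ℕ × ℕ) :=
  (range t ×ˢ range t ×ˢ range t).filter (fun y =>
    0 < y.1 ∧ 0 < y.2.1 ∧ y.1 ≠ y.2.1 ∧ y.1 ≠ 2*y.2.1 ∧ y.2.1 ≠ 2*y.1 ∧
      y.1 + y.2.1 < y.2.2 ∧ y.2.2 + y.1 + y.2.1 + 1 ≤ t)

private def Rf (t : ℕ) : Finset (Bool × Bool × ℕ × ℕ × ℕ) :=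
  univ ×ˢ univ ×ˢ Sf t

private lemma sg_cases (e : Bool) (p : ℕ) : sg e p = (p : ℤ) ∨ sg e p = -(p : ℤ) := by
  cases e <;> simp [sg]

private lemma sg_natAbs_pos (a : ℤ) : sg (decide (0 < a)) a.natAbs = a := by
  simp only [sg, decide_eq_true_eq]
  split <;> omega

private lemma magic_of_mem (t : ℕ) (x : Bool × Bool × ℕ × ℕ × ℕ) (hx : x ∈ Rf t) :
    IsBoundedMagicSquare3 t (matN x) := by
  obtain ⟨e1, e2, p, q, c⟩ := x
  simp only [Rf, Sf, mem_product, mem_univ, mem_filter, mem_range, true_and] at hx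
  have ha := sg_cases e1 p
  have hb := sg_cases e2 q
  set a := sg e1 p with hadef
  set b := sg e2 q with hbdef
  refine ⟨?_, ?_, 3*c, ?_, ?_, ?_, ?_⟩
  · intro i j
    fin_cases i <;> fin_cases j <;> simp [matN, matZ] <;> omega
  · intro u v huv
    fin_cases u <;> fin_cases v <;> first
      | rfl
      | (exfalso; simp [matN, matZ] at huv; omega)
  · intro i
    fin_cases i <;> simp [matN, matZ, Fin.sum_univ_three] <;> omega
  · intro j
    fin_cases j <;> simp [matN, matZ, Fin.sum_univ_three] <;> omega
  · simp [matN, matZ]; omega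
  · simp [matN, matZ]; omega

set_option maxHeartbeats 1000000 in
private lemma exists_of_magic (t : ℕ) (M : Matrix (Fin 3) (Fin 3) ℕ)
    (hM : IsBoundedMagicSquare3 t M) : ∃ x ∈ Rf t, matN x = M := by
  obtain ⟨hpos, hinj, s, hrow, hcol, hdg, hag⟩ := hM
  have hne : ∀ i j i' j' : Fin 3, (i, j) ≠ (i', j') → M i j ≠ M i' j' :=
    fun i j i' j' hd h => hd (hinj h)
  have r0 := hrow 0; have r1 := hrow 1; have r2 := hrow 2
  have c0 := hcol 0; have c1 := hcol 1; have c2 := hcol 2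
  simp only [Fin.sum_univ_three] at r0 r1 r2 c0 c1 c2
  have b00 := hpos 0 0; have b01 := hpos 0 1; have b02 := hpos 0 2
  have b10 := hpos 1 0; have b11 := hpos 1 1; have b12 := hpos 1 2
  have b20 := hpos 2 0; have b21 := hpos 2 1; have b22 := hpos 2 2
  set A := (M 0 0 : ℤ) - (M 1 1 : ℤ) with hA
  set B := (M 0 2 : ℤ) - (M 1 1 : ℤ) with hB
  have e01 : (M 0 1 : ℤ) = (M 1 1 : ℤ) - A - B := by omega
  have e10 : (M 1 0 : ℤ) = (M 1 1 : ℤ) - A + B := by omega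
  have e12 : (M 1 2 : ℤ) = (M 1 1 : ℤ) + A - B := by omega
  have e20 : (M 2 0 : ℤ) = (M 1 1 : ℤ) - B := by omega
  have e21 : (M 2 1 : ℤ) = (M 1 1 : ℤ) + A + B := by omega
  have e22 : (M 2 2 : ℤ) = (M 1 1 : ℤ) - A := by omega
  clear r0 r1 r2 c0 c1 c2 hrow hcol hdg hag hinj hpos
  have f1 : A ≠ 0 := fun hh => hne 0 0 1 1 (by decide) (by omega)
  have f2 : B ≠ 0 := fun hh => hne 0 2 1 1 (by decide) (by omega)
  have f3 : A ≠ B := fun hh => hne 0 0 0 2 (by decide) (by omega)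
  have f4 : A ≠ -B := fun hh => hne 0 0 2 0 (by decide) (by omega)
  have f5 : A ≠ 2*B := fun hh => hne 1 2 0 2 (by decide) (by omega)
  have f6 : A ≠ -(2*B) := fun hh => hne 2 1 2 0 (by decide) (by omega)
  have f7 : B ≠ 2*A := fun hh => hne 1 0 0 0 (by decide) (by omega)
  have f8 : B ≠ -(2*A) := fun hh => hne 2 1 2 2 (by decide) (by omega)
  clear hne
  refine ⟨(decide (0 < A), decide (0 < B), A.natAbs, B.natAbs, M 1 1), ?_, ?_⟩
  · simp only [Rf, Sf, mem_product, mem_univ, mem_filter, mem_range, true_and]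
    omega
  · clear f1 f2 f3 f4 f5 f6 f7 f8 b01 b10 b12 b20 b21 b22 b00 b02 b11
    ext i j
    fin_cases i <;> fin_cases j <;>
      simp [matN, matZ, sg_natAbs_pos] <;> omega

private lemma injOn_matN (t : ℕ) : Set.InjOn matN (Rf t) := by
  rintro ⟨e1, e2, p, q, c⟩ hu ⟨e1', e2', p', q', c'⟩ hv huv
  simp only [coe_product, coe_univ, Set.mem_prod, Set.mem_univ, true_and, mem_coe, Rf,
    Sf, mem_filter, mem_product, mem_range] at hu hv
  have h00 := congrFun (congrFun huv 0) 0
  have h02 := congrFun (congrFun huv 0) 2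
  have h11 := congrFun (congrFun huv 1) 1
  simp only [matN, matZ, Matrix.of_apply] at h00 h02 h11
  simp at h00 h02 h11
  have ha := sg_cases e1 p; have ha' := sg_cases e1' p'
  have hb := sg_cases e2 q; have hb' := sg_cases e2' q'
  have hc : c = c' := by omega
  subst hc
  have hA : sg e1 p = sg e1' p' := by omega
  have hB : sg e2 q = sg e2' q' := by omega
  have hp : p = p' := by omega
  have hq : q = q' := by omega
  subst hp; subst hq
  have he1 : e1 = e1' := by
    cases e1 <;> cases e1' <;> simp [sg] at hA ⊢ <;> omega
  have he2 : e2 = e2' := by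
    cases e2 <;> cases e2' <;> simp [sg] at hB ⊢ <;> omega
  rw [he1, he2]

private lemma c3_eq_card (t : ℕ) : c3 t = (Rf t).card := by
  have hset : {M : Matrix (Fin 3) (Fin 3) ℕ | IsBoundedMagicSquare3 t M}
      = ↑((Rf t).image matN) := by
    ext M
    simp only [Set.mem_setOf_eq, coe_image, Set.mem_image, mem_coe]
    constructor
    · intro hM
      obtain ⟨x, hx, hxe⟩ := exists_of_magic t M hM
      exact ⟨x, hx, hxe⟩
    · rintro ⟨x, hx, rfl⟩
      exact magic_of_mem t x hx
  rw [c3, hset, Set.ncard_coe_finset, Finset.card_image_of_injOn]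
  intro u hu v hv huv
  exact injOn_matN t (by simpa using hu) (by simpa using hv) huv

private def gq (k : ℕ) (y : ℕ × ℕ) : ℚ := 12*k+6 - 2*y.1 - 2*y.2

private def Tri (t : ℕ) : Finset (ℕ × ℕ) :=
  (range t ×ˢ range t).filter (fun y => 0 < y.1 ∧ 0 < y.2 ∧ 2*(y.1+y.2)+2 ≤ t)

private def F1 (t : ℕ) : Finset (ℕ × ℕ) := (Tri t).filter (fun y => ¬ y.1 = y.2)
private def F2 (t : ℕ) : Finset (ℕ × ℕ) := (F1 t).filter (fun y => ¬ y.1 = 2*y.2)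
private def Tf (t : ℕ) : Finset (ℕ × ℕ) := (F2 t).filter (fun y => ¬ y.2 = 2*y.1)

private lemma mem_Tf (t : ℕ) (y : ℕ × ℕ) : y ∈ Tf t ↔
    (y.1 < t ∧ y.2 < t) ∧ (0 < y.1 ∧ 0 < y.2 ∧ 2*(y.1+y.2)+2 ≤ t)
      ∧ y.1 ≠ y.2 ∧ y.1 ≠ 2*y.2 ∧ y.2 ≠ 2*y.1 := by
  simp only [Tf, F2, F1, Tri, mem_filter, mem_product, mem_range]
  tauto

private lemma card_Sf (t : ℕ) : (Sf t).card = ∑ y ∈ Tf t, (t - 1 - 2*(y.1+y.2)) := by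
  rw [Finset.card_eq_sum_card_fiberwise (f := fun x : ℕ × ℕ × ℕ => (x.1, x.2.1)) (t := Tf t)
    (fun x hx => by
      simp only [Sf, mem_coe, mem_filter, mem_product, mem_range] at hx
      rw [mem_coe, mem_Tf]
      dsimp only
      omega)]
  refine Finset.sum_congr rfl (fun y hy => ?_)
  rw [mem_Tf] at hy
  obtain ⟨Y1, Y2⟩ := y
  dsimp only at hy ⊢
  have himg : (Sf t).filter (fun x => (x.1, x.2.1) = (Y1, Y2)) =
      (Icc (Y1+Y2+1) (t-1-Y1-Y2)).image (fun c => (Y1, Y2, c)) := by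
    ext ⟨p, q, c⟩
    simp only [Sf, mem_filter, mem_product, mem_range, mem_image, mem_Icc, Prod.mk.injEq]
    constructor
    · rintro ⟨⟨⟨h1, h2, h3⟩, h4⟩, h5, h6⟩
      exact ⟨c, by omega⟩
    · rintro ⟨a, ha, h1, h2, h3⟩
      refine ⟨⟨⟨?_, ?_, ?_⟩, ?_⟩, ?_, ?_⟩ <;> omega
  rw [himg, Finset.card_image_of_injective _ (fun a b hab => by simpa using hab),
    Nat.card_Icc]
  omega

private lemma sum_Icc_linear (N : ℕ) (α β : ℚ) :
    ∑ p ∈ Icc 1 N, (α + β * (p : ℚ)) = α * N + β * (N * (N + 1) / 2) := by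
  induction N with
  | zero => simp
  | succ n ih =>
    rw [Finset.sum_Icc_succ_top (by omega), ih]
    push_cast
    ring

private lemma sum_Icc_quad (N : ℕ) (α β γ : ℚ) :
    ∑ p ∈ Icc 1 N, (α + β * (p : ℚ) + γ * (p : ℚ) ^ 2)
      = α * N + β * (N * (N + 1) / 2) + γ * (N * (N + 1) * (2 * N + 1) / 6) := by
  induction N with
  | zero => simp
  | succ n ih =>
    rw [Finset.sum_Icc_succ_top (by omega), ih]
    push_cast
    ring

private lemma sumL1 (k : ℕ) : ∑ y ∈ (Tri (12*k+7)).filter (fun y => y.1 = y.2), gq k y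
    = (12*(k:ℚ)+6)*(3*(k:ℚ)+1) - 4*((3*(k:ℚ)+1)*(3*(k:ℚ)+2)/2) := by
  have hL : (Tri (12*k+7)).filter (fun y => y.1 = y.2)
      = (Icc 1 (3*k+1)).image (fun p => (p, p)) := by
    ext ⟨p, q⟩
    simp only [Tri, mem_filter, mem_product, mem_range, mem_image, mem_Icc, Prod.mk.injEq]
    constructor
    · rintro ⟨⟨⟨h1, h2⟩, h3, h4, h5⟩, h6⟩
      exact ⟨p, by omega⟩
    · rintro ⟨a, ha, h1, h2⟩
      omega
  rw [hL, Finset.sum_image (by intro a _ b _ h; simpa using h)]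
  have e1 : ∑ p ∈ Icc 1 (3*k+1), gq k (p, p)
      = ∑ p ∈ Icc 1 (3*k+1), ((12*(k:ℚ)+6) + (-4) * (p:ℚ)) :=
    Finset.sum_congr rfl fun p _ => by simp only [gq]; push_cast; ring
  rw [e1, sum_Icc_linear]
  push_cast
  ring

private lemma sumL2 (k : ℕ) : ∑ y ∈ (F1 (12*k+7)).filter (fun y => y.1 = 2*y.2), gq k y
    = (12*(k:ℚ)+6)*(2*(k:ℚ)) - 6*((2*(k:ℚ))*(2*(k:ℚ)+1)/2) := by
  have hL : (F1 (12*k+7)).filter (fun y => y.1 = 2*y.2)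
      = (Icc 1 (2*k)).image (fun q => (2*q, q)) := by
    ext ⟨p, q⟩
    simp only [F1, Tri, mem_filter, mem_product, mem_range, mem_image, mem_Icc, Prod.mk.injEq]
    constructor
    · rintro ⟨⟨⟨⟨h1, h2⟩, h3, h4, h5⟩, h6⟩, h7⟩
      exact ⟨q, by omega⟩
    · rintro ⟨a, ha, h1, h2⟩
      omega
  rw [hL, Finset.sum_image (by intro a _ b _ h; simpa using h)]
  have e1 : ∑ q ∈ Icc 1 (2*k), gq k (2*q, q)
      = ∑ q ∈ Icc 1 (2*k), ((12*(k:ℚ)+6) + (-6) * (q:ℚ)) :=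
    Finset.sum_congr rfl fun q _ => by simp only [gq]; push_cast; ring
  rw [e1, sum_Icc_linear]
  push_cast
  ring

private lemma sumL3 (k : ℕ) : ∑ y ∈ (F2 (12*k+7)).filter (fun y => y.2 = 2*y.1), gq k y
    = (12*(k:ℚ)+6)*(2*(k:ℚ)) - 6*((2*(k:ℚ))*(2*(k:ℚ)+1)/2) := by
  have hL : (F2 (12*k+7)).filter (fun y => y.2 = 2*y.1)
      = (Icc 1 (2*k)).image (fun p => (p, 2*p)) := by
    ext ⟨p, q⟩
    simp only [F2, F1, Tri, mem_filter, mem_product, mem_range, mem_image, mem_Icc,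
      Prod.mk.injEq]
    constructor
    · rintro ⟨⟨⟨⟨⟨h1, h2⟩, h3, h4, h5⟩, h6⟩, h7⟩, h8⟩
      exact ⟨p, by omega⟩
    · rintro ⟨a, ha, h1, h2⟩
      omega
  rw [hL, Finset.sum_image (by intro a _ b _ h; simpa using h)]
  have e1 : ∑ p ∈ Icc 1 (2*k), gq k (p, 2*p)
      = ∑ p ∈ Icc 1 (2*k), ((12*(k:ℚ)+6) + (-6) * (p:ℚ)) :=
    Finset.sum_congr rfl fun p _ => by simp only [gq]; push_cast; ring
  rw [e1, sum_Icc_linear]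
  push_cast
  ring

private lemma sumTri (k : ℕ) : ∑ y ∈ Tri (12*k+7), gq k y
    = ((6*(k:ℚ)+2)*(6*(k:ℚ)+3)) * ((6*(k:ℚ)+1))
      + (-(12*(k:ℚ)+5)) * ((6*(k:ℚ)+1)*(6*(k:ℚ)+2)/2)
      + 1 * ((6*(k:ℚ)+1)*(6*(k:ℚ)+2)*(2*(6*(k:ℚ)+1)+1)/6) := by
  have hT : Tri (12*k+7)
      = (Icc 1 (6*k+1)).biUnion (fun p => (Icc 1 (6*k+2-p)).image (fun q => (p, q))) := by
    ext ⟨p, q⟩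
    simp only [Tri, mem_filter, mem_product, mem_range, mem_biUnion, mem_Icc, mem_image,
      Prod.mk.injEq]
    constructor
    · rintro ⟨⟨h1, h2⟩, h3, h4, h5⟩
      exact ⟨p, by omega, q, by omega⟩
    · rintro ⟨a, ha, b, hb, h1, h2⟩
      omega
  have hdisj : (↑(Icc 1 (6*k+1)) : Set ℕ).PairwiseDisjoint
      (fun p => (Icc 1 (6*k+2-p)).image (fun q => (p, q))) := by
    intro a _ b _ hab
    simp only [Function.onFun]
    rw [Finset.disjoint_left]
    rintro ⟨u, v⟩ hu hv
    simp only [mem_image, mem_Icc, Prod.mk.injEq] at hu hv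
    obtain ⟨x, _, hx1, hx2⟩ := hu
    obtain ⟨y, _, hy1, hy2⟩ := hv
    exact hab (by omega)
  rw [hT, Finset.sum_biUnion hdisj]
  have inner : ∀ p ∈ Icc 1 (6*k+1),
      ∑ y ∈ (Icc 1 (6*k+2-p)).image (fun q => (p, q)), gq k y
        = ((6*(k:ℚ)+2)*(6*(k:ℚ)+3)) + (-(12*(k:ℚ)+5)) * (p:ℚ) + 1 * (p:ℚ)^2 := by
    intro p hp
    simp only [mem_Icc] at hp
    rw [Finset.sum_image (by intro a _ b _ h; simpa using h)]
    have e1 : ∑ q ∈ Icc 1 (6*k+2-p), gq k (p, q)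
        = ∑ q ∈ Icc 1 (6*k+2-p), ((12*(k:ℚ)+6-2*(p:ℚ)) + (-2) * (q:ℚ)) :=
      Finset.sum_congr rfl fun q _ => by simp only [gq]; push_cast; ring
    rw [e1, sum_Icc_linear]
    have hc : ((6*k+2-p : ℕ) : ℚ) = 6*(k:ℚ)+2-(p:ℚ) := by
      rw [Nat.cast_sub (by omega)]; push_cast; ring
    rw [hc]; ring
  rw [Finset.sum_congr rfl inner, sum_Icc_quad]
  push_cast
  ring

private lemma sumTf (k : ℕ) : ∑ y ∈ Tf (12*k+7), gq k y
    = (∑ y ∈ Tri (12*k+7), gq k y)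
      - (∑ y ∈ (Tri (12*k+7)).filter (fun y => y.1 = y.2), gq k y)
      - (∑ y ∈ (F1 (12*k+7)).filter (fun y => y.1 = 2*y.2), gq k y)
      - (∑ y ∈ (F2 (12*k+7)).filter (fun y => y.2 = 2*y.1), gq k y) := by
  have eA := Finset.sum_filter_add_sum_filter_not (Tri (12*k+7)) (fun y => y.1 = y.2) (gq k)
  have eB := Finset.sum_filter_add_sum_filter_not (F1 (12*k+7)) (fun y => y.1 = 2*y.2) (gq k)
  have eC := Finset.sum_filter_add_sum_filter_not (F2 (12*k+7)) (fun y => y.2 = 2*y.1) (gq k)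
  have idA : (Tri (12*k+7)).filter (fun y => ¬ y.1 = y.2) = F1 (12*k+7) := rfl
  have idB : (F1 (12*k+7)).filter (fun y => ¬ y.1 = 2*y.2) = F2 (12*k+7) := rfl
  have idC : (F2 (12*k+7)).filter (fun y => ¬ y.2 = 2*y.1) = Tf (12*k+7) := rfl
  rw [idA] at eA
  rw [idB] at eB
  rw [idC] at eC
  linarith

private lemma card_Rf (t : ℕ) : (Rf t).card = 4 * (Sf t).card := by
  simp only [Rf, Finset.card_product, Finset.card_univ, Fintype.card_bool]
  omega

theorem c3_formula_mod12_7 (t : ℕ) (ht : 0 < t) (h : t % 12 = 7) :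
    (c3 t : ℚ) = ((t : ℚ) ^ 3 - 16 * (t : ℚ) ^ 2 + 73 * (t : ℚ) - 70) / 6 := by
  obtain ⟨k, rfl⟩ : ∃ k, t = 12*k+7 := ⟨t/12, by omega⟩
  have hcard : c3 (12*k+7) = 4 * (Sf (12*k+7)).card := by
    rw [c3_eq_card, card_Rf]
  have h4 : ((Sf (12*k+7)).card : ℚ) = ∑ y ∈ Tf (12*k+7), gq k y := by
    rw [card_Sf, Nat.cast_sum]
    refine Finset.sum_congr rfl fun y hy => ?_
    rw [mem_Tf] at hy
    have hle : 2*(y.1+y.2)+2 ≤ 12*k+7 := hy.2.1.2.2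
    have hsub : (12*k+7) - 1 - 2*(y.1+y.2) + (2*(y.1+y.2)+1) = 12*k+7 := by omega
    have hc := congrArg (Nat.cast (R := ℚ)) hsub
    push_cast at hc
    simp only [gq]
    push_cast
    linarith
  have hTf := sumTf k
  rw [sumTri, sumL1, sumL2, sumL3] at hTf
  rw [hcard]
  push_cast
  rw [h4, hTf]
  ring
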